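/- Let A ⊆ B ⊆ {0,…,q-1}^m with A and B nonempty, and let Q be the set of polynomials f ∈ F_q[X_1,…,X_m] whose support is contained in B \ A. Let t_{C_B} = ⌊(δ(C_B)-1)/2⌋. If y ∈ F_q^n satisfies d_H(y, C_B) ≤ t_{C_B}, then there exists a unique polynomial f ∈ Q such that d_H(y - ev(f), C_A) ≤ t_{C_B}. -/

import Mathlib

open MvPolynomial Finset Pointwise

noncomputable section

/-- Evaluation of a multivariate polynomial at all points of `F^m`. -/
def evalPt {F : Type} [Field F] {m : ℕ} (f : MvPolynomial (Fin m) F) : (Fin m → F) → F :=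
  fun P => MvPolynomial.eval P f

/-- The monomial code `C_A = ev(F_q[A])`, the evaluations of the polynomials
whose monomial support is contained in `A`. -/
def monomialCode (F : Type) [Field F] (m : ℕ) (A : Set (Fin m →₀ ℕ)) :
    Set ((Fin m → F) → F) :=
  { v | ∃ f : MvPolynomial (Fin m) F, (↑f.support : Set (Fin m →₀ ℕ)) ⊆ A ∧ v = evalPt f }

/-- Exponent set of the Reed–Muller code `RM_q(s,m)` (empty when `s < 0`). -/
def RMset (q m : ℕ) (s : ℤ) : Set (Fin m →₀ ℕ) :=
  { i | (∀ j, i j < q) ∧ (∑ j, (i j : ℤ)) ≤ s }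

/-- Exponent set of the hyperbolic code `Hyp_q(d,m)`. -/
def Hypset (q m d : ℕ) : Set (Fin m →₀ ℕ) :=
  { i | (∀ j, i j < q) ∧ d ≤ ∏ j, (q - i j) }

/-- Exponent set of the cube code `Cube_q(s,m)`. -/
def Cubeset (m s : ℕ) : Set (Fin m →₀ ℕ) :=
  { i | ∀ j, i j ≤ s }

/-- Minimum distance of a code: least Hamming weight of a nonzero codeword. -/
def minDist {F : Type} [Field F] [Fintype F] [DecidableEq F] {m : ℕ}
    (C : Set ((Fin m → F) → F)) : ℕ :=
  sInf { w | ∃ v ∈ C, v ≠ 0 ∧ hammingNorm v = w }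

/-- Hamming distance from a word to a code. -/
def distToCode {F : Type} [Field F] [Fintype F] [DecidableEq F] {m : ℕ}
    (y : (Fin m → F) → F) (C : Set ((Fin m → F) → F)) : ℕ :=
  sInf { w | ∃ c ∈ C, hammingDist y c = w }

/-- `i`-fold Minkowski sum of `H` with itself (`0`-fold sum is `{0}`). -/
def iMink {m : ℕ} (H : Set (Fin m →₀ ℕ)) : ℕ → Set (Fin m →₀ ℕ)
  | 0 => {0}
  | i + 1 => iMink H i + H

/-- The sets `L(d,r,i)` from the Geil–Matsumoto list-decoding algorithm. -/
def Lset (q m d r i : ℕ) : Set (Fin m →₀ ℕ) :=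
  { a | (∀ j, a j < q) ∧ ∀ x ∈ iMink (Hypset q m d) i, a + x ∈ Hypset q m (r + 1) }

section Aux

open Classical in
lemma aux_evalPt_add {F : Type} [Field F] {m : ℕ} (f g : MvPolynomial (Fin m) F) :
    evalPt (f + g) = evalPt f + evalPt g := by
  funext P; simp [evalPt]

lemma aux_evalPt_zero {F : Type} [Field F] {m : ℕ} :
    evalPt (0 : MvPolynomial (Fin m) F) = 0 := by
  funext P; simp [evalPt]

lemma aux_evalPt_sub {F : Type} [Field F] {m : ℕ} (f g : MvPolynomial (Fin m) F) :
    evalPt (f - g) = evalPt f - evalPt g := by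
  funext P; simp [evalPt]

lemma aux_zero_mem {F : Type} [Field F] {m : ℕ} (A : Set (Fin m →₀ ℕ)) :
    (0 : (Fin m → F) → F) ∈ monomialCode F m A :=
  ⟨0, by simp, aux_evalPt_zero.symm⟩

lemma aux_exists_close {F : Type} [Field F] [Fintype F] [DecidableEq F] {m : ℕ}
    {y : (Fin m → F) → F} {C : Set ((Fin m → F) → F)}
    (hC : (0 : (Fin m → F) → F) ∈ C) {t : ℕ} (h : distToCode y C ≤ t) :
    ∃ c ∈ C, hammingDist y c ≤ t := by
  have hne : {w | ∃ c ∈ C, hammingDist y c = w}.Nonempty := ⟨_, 0, hC, rfl⟩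
  obtain ⟨c, hc, hw⟩ := Nat.sInf_mem hne
  unfold distToCode at h
  exact ⟨c, hc, le_trans (le_of_eq hw) h⟩

lemma aux_evalPt_inj {F : Type} [Field F] [Fintype F] {q m : ℕ}
    (hq : Fintype.card F = q) {f : MvPolynomial (Fin m) F}
    (hf : ∀ i ∈ f.support, ∀ j, i j < q) (h0 : evalPt f = 0) : f = 0 := by
  apply MvPolynomial.eq_zero_of_eval_eq_zero (Fin m) F f (fun v => congrFun h0 v)
  rw [MvPolynomial.mem_restrictDegree]
  intro s hs i
  have := hf s hs i
  have hc : 1 ≤ Fintype.card F := Fintype.card_pos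
  omega

end Aux

/-- for `A ⊆ B ⊆ {0,…,q-1}^m` nonempty and `t = ⌊(δ(C_B)-1)/2⌋`, any word
within distance `t` of `C_B` equals `ev(f)` plus a word within distance `t` of `C_A`,
for a unique polynomial `f` with support in `B \ A`. -/
theorem statement9 (F : Type) [Field F] [Fintype F] [DecidableEq F]
    (q m : ℕ) (hq : Fintype.card F = q)
    (A B : Set (Fin m →₀ ℕ)) (hAB : A ⊆ B) (hB : B ⊆ {i | ∀ j, i j < q})
    (hA : A.Nonempty) (hBne : B.Nonempty)
    (t : ℕ) (ht : t = (minDist (monomialCode F m B) - 1) / 2)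
    (y : (Fin m → F) → F) (hy : distToCode y (monomialCode F m B) ≤ t) :
    ∃! f : MvPolynomial (Fin m) F,
      (↑f.support : Set (Fin m →₀ ℕ)) ⊆ B \ A ∧
        distToCode (y - evalPt f) (monomialCode F m A) ≤ t := by
  classical
  -- Uniqueness part
  have key : ∀ f1 f2 : MvPolynomial (Fin m) F,
      ((↑f1.support : Set (Fin m →₀ ℕ)) ⊆ B \ A ∧
        distToCode (y - evalPt f1) (monomialCode F m A) ≤ t) →
      ((↑f2.support : Set (Fin m →₀ ℕ)) ⊆ B \ A ∧
        distToCode (y - evalPt f2) (monomialCode F m A) ≤ t) → f1 = f2 := by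
    rintro f1 f2 ⟨hs1, hd1⟩ ⟨hs2, hd2⟩
    obtain ⟨c1, ⟨g1, hg1, rfl⟩, hc1⟩ := aux_exists_close (aux_zero_mem A) hd1
    obtain ⟨c2, ⟨g2, hg2, rfl⟩, hc2⟩ := aux_exists_close (aux_zero_mem A) hd2
    set p1 := f1 + g1 with hp1
    set p2 := f2 + g2 with hp2
    have hdy : ∀ (f g : MvPolynomial (Fin m) F),
        hammingDist y (evalPt (f + g)) = hammingDist (y - evalPt f) (evalPt g) := by
      intro f g
      rw [hammingDist_eq_hammingNorm, hammingDist_eq_hammingNorm, aux_evalPt_add]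
      congr 1; abel
    have h1 : hammingDist y (evalPt p1) ≤ t := by rw [hp1, hdy]; exact hc1
    have h2 : hammingDist y (evalPt p2) ≤ t := by rw [hp2, hdy]; exact hc2
    have hsupB : (↑(p1 - p2).support : Set (Fin m →₀ ℕ)) ⊆ B := by
      intro i hi
      have hco : MvPolynomial.coeff i (p1 - p2) ≠ 0 := MvPolynomial.mem_support_iff.mp hi
      by_contra hib
      have c1 : MvPolynomial.coeff i f1 = 0 := by
        by_contra h; exact hib (hs1 (MvPolynomial.mem_support_iff.mpr h)).1
      have c2 : MvPolynomial.coeff i f2 = 0 := by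
        by_contra h; exact hib (hs2 (MvPolynomial.mem_support_iff.mpr h)).1
      have c3 : MvPolynomial.coeff i g1 = 0 := by
        by_contra h; exact hib (hAB (hg1 (MvPolynomial.mem_support_iff.mpr h)))
      have c4 : MvPolynomial.coeff i g2 = 0 := by
        by_contra h; exact hib (hAB (hg2 (MvPolynomial.mem_support_iff.mpr h)))
      apply hco
      rw [MvPolynomial.coeff_sub, hp1, hp2, MvPolynomial.coeff_add, MvPolynomial.coeff_add,
        c1, c2, c3, c4]
      ring
    have hpe : p1 = p2 := by
      have hz : evalPt (p1 - p2) = 0 := by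
        by_contra hz
        have hmem : evalPt (p1 - p2) ∈ monomialCode F m B := ⟨p1 - p2, hsupB, rfl⟩
        have hδ : minDist (monomialCode F m B) ≤ hammingNorm (evalPt (p1 - p2)) :=
          Nat.sInf_le ⟨_, hmem, hz, rfl⟩
        have htri := hammingDist_triangle (evalPt p1) y (evalPt p2)
        have hcomm : hammingDist (evalPt p1) y = hammingDist y (evalPt p1) :=
          hammingDist_comm _ _
        have hnq : hammingNorm (evalPt (p1 - p2)) = hammingDist (evalPt p1) (evalPt p2) := by
          rw [hammingDist_comm, hammingDist_eq_hammingNorm, aux_evalPt_sub]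
          congr 1; abel
        have hzero : hammingNorm (evalPt (p1 - p2)) = 0 := by omega
        exact hz (hammingNorm_eq_zero.mp hzero)
      have : p1 - p2 = 0 := by
        refine aux_evalPt_inj hq (fun i hi j => hB (hsupB hi) j) hz
      exact sub_eq_zero.mp this
    apply MvPolynomial.ext
    intro e
    have hc := congrArg (MvPolynomial.coeff e) hpe
    rw [hp1, hp2, MvPolynomial.coeff_add, MvPolynomial.coeff_add] at hc
    by_cases hA1 : MvPolynomial.coeff e f1 = 0 <;>
      by_cases hA2 : MvPolynomial.coeff e f2 = 0
    · rw [hA1, hA2]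
    all_goals
      have heA : e ∉ A := by
        first
          | exact fun h => (hs2 (MvPolynomial.mem_support_iff.mpr hA2)).2 h
          | exact fun h => (hs1 (MvPolynomial.mem_support_iff.mpr hA1)).2 h
    all_goals
      have hg1e : MvPolynomial.coeff e g1 = 0 := by
        by_contra h; exact heA (hg1 (MvPolynomial.mem_support_iff.mpr h))
    all_goals
      have hg2e : MvPolynomial.coeff e g2 = 0 := by
        by_contra h; exact heA (hg2 (MvPolynomial.mem_support_iff.mpr h))
    all_goals rw [hg1e, hg2e] at hc; simpa using hc
  -- Existence part
  obtain ⟨c, ⟨g, hg, rfl⟩, hcy⟩ := aux_exists_close (aux_zero_mem B) hy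
  set f : MvPolynomial (Fin m) F :=
    AddMonoidAlgebra.ofCoeff (Finsupp.filter (fun i => ¬ i ∈ A) (AddMonoidAlgebra.coeff g)) with hf
  set h : MvPolynomial (Fin m) F :=
    AddMonoidAlgebra.ofCoeff (Finsupp.filter (fun i => i ∈ A) (AddMonoidAlgebra.coeff g)) with hh
  have hfg : h + f = g :=
    congrArg AddMonoidAlgebra.ofCoeff (Finsupp.filter_pos_add_filter_neg _ _)
  have hfsupp : (↑f.support : Set (Fin m →₀ ℕ)) ⊆ B \ A := by
    intro i hi
    have hi2 : i ∈ (Finsupp.filter (fun i => ¬ i ∈ A) (AddMonoidAlgebra.coeff g)).support := hi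
    rw [Finsupp.support_filter, Finset.mem_filter] at hi2
    exact ⟨hg hi2.1, hi2.2⟩
  have hhsupp : (↑h.support : Set (Fin m →₀ ℕ)) ⊆ A := by
    intro i hi
    have hi2 : i ∈ (Finsupp.filter (fun i => i ∈ A) (AddMonoidAlgebra.coeff g)).support := hi
    rw [Finsupp.support_filter, Finset.mem_filter] at hi2
    exact hi2.2
  have hfdist : distToCode (y - evalPt f) (monomialCode F m A) ≤ t := by
    have hd : hammingDist (y - evalPt f) (evalPt h) ≤ t := by
      rw [hammingDist_eq_hammingNorm]
      have : y - evalPt f - evalPt h = y - evalPt g := by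
        rw [← hfg, aux_evalPt_add]; abel
      rw [← hfg, aux_evalPt_add, hammingDist_eq_hammingNorm] at hcy
      convert hcy using 2; abel
    exact le_trans (Nat.sInf_le ⟨evalPt h, ⟨h, hhsupp, rfl⟩, rfl⟩) hd
  exact ⟨f, ⟨hfsupp, hfdist⟩, fun f' hf' => key f' f hf' ⟨hfsupp, hfdist⟩⟩
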